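/- For any matrices Z₁, Z₂ ∈ ℝ^{d×n}, the quantity ΔR(Z₁, Z₂) := R([Z₁ Z₂]) − (1/2)R(Z₁) − (1/2)R(Z₂) is nonnegative, where R(Z) := (1/2)·log det(I_d + (d/(mε²)) Z Zᵀ) with m the number of columns of Z and ε > 0. Moreover, ΔR(Z₁, Z₂) = 0 if and only if Z₁Z₁ᵀ = Z₂Z₂ᵀ. -/

import Mathlib

open Matrix

noncomputable def codingRate {d : ℕ} {m : Type*} [Fintype m] (ε : ℝ)
    (Z : Matrix (Fin d) m ℝ) : ℝ :=
  (1 / 2) * Real.log ((1 + ((d : ℝ) / (Fintype.card m * ε ^ 2)) • (Z * Zᵀ)).det)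

noncomputable def deltaR {d n : ℕ} (ε : ℝ) (Z₁ Z₂ : Matrix (Fin d) (Fin n) ℝ) : ℝ :=
  codingRate ε (fromCols Z₁ Z₂) - (1 / 2) * codingRate ε Z₁ - (1 / 2) * codingRate ε Z₂

theorem Matrix.isHermitian_transpose_mul_self {m n : Type*} [Fintype m]
    (A : Matrix m n ℝ) : (Aᵀ * A).IsHermitian := by
  simpa using Matrix.isHermitian_conjTranspose_mul_self A

noncomputable def sval {d n : ℕ} (A : Matrix (Fin d) (Fin n) ℝ) : Fin n → ℝ :=
  fun p => Real.sqrt ((Matrix.isHermitian_transpose_mul_self A).eigenvalues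
    (Tuple.sort ((Matrix.isHermitian_transpose_mul_self A).eigenvalues) p.rev))

noncomputable def colSpan {d n : ℕ} (A : Matrix (Fin d) (Fin n) ℝ) :
    Submodule ℝ (Fin d → ℝ) :=
  Submodule.span ℝ (Set.range Aᵀ)

lemma sqrt_le_half_add (x : ℝ) (hx : 0 ≤ x) : Real.sqrt x ≤ (1 + x) / 2 := by
  nlinarith [Real.sq_sqrt hx, Real.sqrt_nonneg x, sq_nonneg (Real.sqrt x - 1)]

lemma eq_one_of_sqrt_eq (x : ℝ) (hx : 0 ≤ x) (h : Real.sqrt x = (1 + x) / 2) : x = 1 := by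
  nlinarith [Real.sq_sqrt hx, Real.sqrt_nonneg x]

open scoped MatrixOrder in
lemma logdet_key {d : ℕ} {M N : Matrix (Fin d) (Fin d) ℝ} (hM : M.PosDef) (hN : N.PosDef) :
    Real.sqrt (M.det * N.det) ≤ ((1/2 : ℝ) • (M + N)).det ∧
    (((1/2 : ℝ) • (M + N)).det = Real.sqrt (M.det * N.det) ↔ M = N) := by
  classical
  set S := CFC.sqrt M with hSdef
  have hS : S * S = M := CFC.sqrt_mul_sqrt_self M hM.posSemidef.nonneg
  have hSH : Sᴴ = S := (CFC.sqrt_nonneg M).posSemidef.1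
  have hdetM := hM.det_pos
  have hdetN := hN.det_pos
  have hSdet2 : S.det * S.det = M.det := by rw [← det_mul, hS]
  have hSdet : S.det ≠ 0 := by
    intro h; rw [h, mul_zero] at hSdet2; exact hdetM.ne hSdet2
  have hU : IsUnit S.det := hSdet.isUnit
  have hinv1 : S * S⁻¹ = 1 := mul_nonsing_inv _ hU
  have hinv2 : S⁻¹ * S = 1 := nonsing_inv_mul _ hU
  have hinvH : (S⁻¹)ᴴ = S⁻¹ := by rw [conjTranspose_nonsing_inv, hSH]
  set C := S⁻¹ * N * S⁻¹ with hCdef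
  have hCps : C.PosSemidef := by
    have := hN.posSemidef.conjTranspose_mul_mul_same S⁻¹
    rwa [hinvH] at this
  have hNC : N = S * C * S := by
    rw [hCdef]
    calc N = (S * S⁻¹) * N * (S⁻¹ * S) := by rw [hinv1, hinv2, one_mul, mul_one]
    _ = S * (S⁻¹ * N * S⁻¹) * S := by noncomm_ring
  have hMN : (1/2 : ℝ) • (M + N) = S * ((1/2 : ℝ) • (1 + C)) * S := by
    rw [Matrix.mul_smul, Matrix.smul_mul]
    congr 1
    rw [mul_add, add_mul, mul_one, hS, ← hNC]
  set μ := hCps.1.eigenvalues with hμdef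
  have hμ0 : ∀ i, 0 ≤ μ i := hCps.eigenvalues_nonneg
  have hdetC : C.det = ∏ i, μ i := by simpa using hCps.1.det_eq_prod_eigenvalues
  have hdetNC : N.det = M.det * C.det := by
    rw [hNC, det_mul, det_mul, ← hSdet2]; ring
  -- det (1/2 • (1+C)) = ∏ (1 + μ i)/2
  have hdet1C : ((1/2 : ℝ) • (1 + C)).det = ∏ i, (1 + μ i) / 2 := by
    have hspec := hCps.1.spectral_theorem
    rw [Unitary.conjStarAlgAut_apply] at hspec
    set U := (hCps.1.eigenvectorUnitary : Matrix (Fin d) (Fin d) ℝ)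
    have hUU : U * star U = 1 := (Matrix.mem_unitaryGroup_iff).mp hCps.1.eigenvectorUnitary.2
    have h1 : (1 : Matrix (Fin d) (Fin d) ℝ) + C
        = U * (1 + diagonal (RCLike.ofReal ∘ μ)) * star U := by
      rw [mul_add, add_mul, mul_one, hUU, ← hspec]
    have h2 : (1 + C).det = ∏ i, (1 + μ i) := by
      rw [h1, det_mul_right_comm, hUU, one_mul]
      have : (1 : Matrix (Fin d) (Fin d) ℝ) + diagonal (RCLike.ofReal ∘ μ)
          = diagonal (fun i => 1 + μ i) := by
        rw [← diagonal_one, diagonal_add]; congr 1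
      rw [this, det_diagonal]
    rw [det_smul, h2, Fintype.card_fin, Finset.prod_div_distrib, Finset.prod_const,
      Finset.card_univ, Fintype.card_fin]
    rw [one_div, inv_pow, div_eq_inv_mul]
  have hmain : ((1/2 : ℝ) • (M + N)).det = M.det * ∏ i, (1 + μ i) / 2 := by
    rw [hMN, det_mul, det_mul, hdet1C, ← hSdet2]; ring
  have hsqrtprod : Real.sqrt (∏ i, μ i) = ∏ i, Real.sqrt (μ i) := by
    calc Real.sqrt (∏ i, μ i) = Real.sqrt (∏ i, (Real.sqrt (μ i))^2) := by
          rw [Finset.prod_congr rfl fun i _ => (Real.sq_sqrt (hμ0 i)).symm]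
      _ = Real.sqrt ((∏ i, Real.sqrt (μ i))^2) := by rw [Finset.prod_pow]
      _ = ∏ i, Real.sqrt (μ i) :=
          Real.sqrt_sq (Finset.prod_nonneg fun i _ => Real.sqrt_nonneg _)
  have hsqrtMN : Real.sqrt (M.det * N.det) = M.det * ∏ i, Real.sqrt (μ i) := by
    rw [hdetNC, hdetC, show M.det * (M.det * ∏ i, μ i) = M.det ^ 2 * ∏ i, μ i by ring,
      Real.sqrt_mul (by positivity), Real.sqrt_sq hdetM.le, hsqrtprod]
  have hμpos : ∀ i, 0 < μ i := by
    intro i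
    rcases (hμ0 i).lt_or_eq with h | h
    · exact h
    · exfalso
      have : C.det ≠ 0 := by
        intro h0
        rw [hdetNC, h0, mul_zero] at hdetN; exact hdetN.ne' (by linarith)
      rw [hdetC] at this
      exact this (Finset.prod_eq_zero (Finset.mem_univ i) h.symm)
  have hle : ∀ i ∈ Finset.univ, Real.sqrt (μ i) ≤ (1 + μ i) / 2 :=
    fun i _ => sqrt_le_half_add _ (hμ0 i)
  constructor
  · rw [hmain, hsqrtMN]
    exact mul_le_mul_of_nonneg_left
      (Finset.prod_le_prod (fun i _ => Real.sqrt_nonneg _) hle) hdetM.le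
  · constructor
    · intro h
      rw [hmain, hsqrtMN] at h
      have hprodeq : ∏ i, (1 + μ i) / 2 = ∏ i, Real.sqrt (μ i) :=
        mul_left_cancel₀ hdetM.ne' h
      have hall : ∀ i, Real.sqrt (μ i) = (1 + μ i) / 2 := by
        by_contra hcon
        push_neg at hcon
        obtain ⟨i, hi⟩ := hcon
        have : ∏ i, Real.sqrt (μ i) < ∏ i, (1 + μ i) / 2 :=
          Finset.prod_lt_prod (fun i _ => Real.sqrt_pos.mpr (hμpos i)) hle
            ⟨i, Finset.mem_univ i, ((hle i (Finset.mem_univ i)).lt_of_ne hi)⟩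
        rw [hprodeq] at this; exact lt_irrefl _ this
      have hμ1 : ∀ i, μ i = 1 := fun i => eq_one_of_sqrt_eq _ (hμ0 i) (hall i)
      have hC1 : C = 1 := by
        have hspec := hCps.1.spectral_theorem
        rw [Unitary.conjStarAlgAut_apply] at hspec
        have : diagonal (RCLike.ofReal ∘ μ) = (1 : Matrix (Fin d) (Fin d) ℝ) := by
          ext i j
          by_cases hij : i = j <;> simp [Matrix.diagonal_apply, hij, hμ1, Matrix.one_apply]
        rw [hμdef] at this
        rw [hspec, this, mul_one]
        exact (Matrix.mem_unitaryGroup_iff).mp hCps.1.eigenvectorUnitary.2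
      rw [hNC, hC1, mul_one, hS]
    · intro h
      subst h
      have : (1/2 : ℝ) • (M + M) = M := by
        rw [← two_smul ℝ, smul_smul]; norm_num
      rw [this, Real.sqrt_mul_self hdetM.le]

lemma psd_smul {d : ℕ} {A : Matrix (Fin d) (Fin d) ℝ} (hA : A.PosSemidef) {c : ℝ}
    (hc : 0 ≤ c) : (c • A).PosSemidef := by
  constructor
  · unfold Matrix.IsHermitian
    rw [conjTranspose_smul, hA.1]
    simp
  · exact (hA.smul hc).2

/-- ΔR(Z₁,Z₂) ≥ 0, with equality iff Z₁Z₁ᵀ = Z₂Z₂ᵀ. -/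
theorem stmt0 {d n : ℕ} (hd : 1 ≤ d) (hn : 1 ≤ n) (ε : ℝ) (hε : 0 < ε)
    (Z₁ Z₂ : Matrix (Fin d) (Fin n) ℝ) :
    0 ≤ deltaR ε Z₁ Z₂ ∧ (deltaR ε Z₁ Z₂ = 0 ↔ Z₁ * Z₁ᵀ = Z₂ * Z₂ᵀ) := by
  classical
  have hn' : (0:ℝ) < n := by exact_mod_cast hn
  have hd' : (0:ℝ) < d := by exact_mod_cast hd
  set A := Z₁ * Z₁ᵀ with hAdef
  set B := Z₂ * Z₂ᵀ with hBdef
  set c : ℝ := (d:ℝ)/(n * ε^2) with hcdef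
  have hc : 0 < c := by positivity
  have htr1 : Z₁ᵀ = Z₁ᴴ := by ext i j; simp [conjTranspose_apply]
  have htr2 : Z₂ᵀ = Z₂ᴴ := by ext i j; simp [conjTranspose_apply]
  have hApsd : A.PosSemidef := by
    rw [hAdef, htr1]; exact posSemidef_self_mul_conjTranspose Z₁
  have hBpsd : B.PosSemidef := by
    rw [hBdef, htr2]; exact posSemidef_self_mul_conjTranspose Z₂
  set M : Matrix (Fin d) (Fin d) ℝ := 1 + c • A with hMdef
  set N : Matrix (Fin d) (Fin d) ℝ := 1 + c • B with hNdef
  have hMpd : M.PosDef := Matrix.PosDef.one.add_posSemidef (psd_smul hApsd hc.le)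
  have hNpd : N.PosDef := Matrix.PosDef.one.add_posSemidef (psd_smul hBpsd hc.le)
  have hcoef : ((d:ℝ) / ((Fintype.card (Fin n ⊕ Fin n) : ℝ) * ε^2)) = c/2 := by
    have : (Fintype.card (Fin n ⊕ Fin n) : ℝ) = 2*n := by
      simp [Fintype.card_sum]; ring
    rw [this, hcdef, div_div]
    ring
  have hcoefn : ((d:ℝ) / ((Fintype.card (Fin n) : ℝ) * ε^2)) = c := by
    simp [Fintype.card_fin, hcdef]
  have hcat : (fromCols Z₁ Z₂) * (fromCols Z₁ Z₂)ᵀ = A + B := by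
    rw [transpose_fromCols, fromCols_mul_fromRows]
  have hform : (1 : Matrix (Fin d) (Fin d) ℝ) + (c/2) • (A+B) = (1/2 : ℝ) • (M + N) := by
    rw [hMdef, hNdef]; module
  set L : ℝ := ((1/2 : ℝ) • (M + N)).det with hLdef
  have hΔ : deltaR ε Z₁ Z₂ = (1/2)*Real.log L - (1/4)*Real.log M.det - (1/4)*Real.log N.det := by
    unfold deltaR codingRate
    rw [hcat, hcoef, hcoefn, hform]
    ring
  obtain ⟨hineq, hiff⟩ := logdet_key hMpd hNpd
  have hdets : 0 < M.det * N.det := mul_pos hMpd.det_pos hNpd.det_pos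
  have hsq : 0 < Real.sqrt (M.det * N.det) := Real.sqrt_pos.mpr hdets
  have hLpos : 0 < L := lt_of_lt_of_le hsq hineq
  have hlogsq : Real.log (Real.sqrt (M.det * N.det))
      = (1/2)*(Real.log M.det + Real.log N.det) := by
    rw [Real.log_sqrt hdets.le, Real.log_mul hMpd.det_pos.ne' hNpd.det_pos.ne']
    ring
  have hloge : Real.log (Real.sqrt (M.det * N.det)) ≤ Real.log L :=
    Real.log_le_log hsq hineq
  have hMN_iff : M = N ↔ A = B := by
    constructor
    · intro h
      have := add_left_cancel (hMdef ▸ hNdef ▸ h)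
      exact smul_right_injective (Matrix (Fin d) (Fin d) ℝ) hc.ne' this
    · intro h; rw [hMdef, hNdef, h]
  constructor
  · rw [hΔ]; rw [hlogsq] at hloge; linarith
  · rw [hΔ]
    constructor
    · intro h
      have hlogeq : Real.log L = Real.log (Real.sqrt (M.det * N.det)) := by
        rw [hlogsq]; linarith
      have hLeq : L = Real.sqrt (M.det * N.det) :=
        Real.log_injOn_pos (Set.mem_Ioi.mpr hLpos) (Set.mem_Ioi.mpr hsq) hlogeq
      exact hMN_iff.mp (hiff.mp hLeq)
    · intro h
      have hMNe : M = N := hMN_iff.mpr h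
      have hLeq : L = Real.sqrt (M.det * N.det) := hiff.mpr hMNe
      rw [hLeq, hlogsq]
      ring
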